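/- Let d ≥ 1, let Λ be a finitely generated additive submonoid of (Fin d → ℕ), and let n : Fin d → ℕ satisfy ⟨n,u⟩ > 0 for every u ∈ Λ with u ≠ 0. For each k ∈ ℕ, the map sending a nonzero class φ mod p_{k+1} (for φ ∈ p_k) to the n-initial form in_n φ, and the zero class to 0, is a well-defined ℂ-linear isomorphism from the quotient module p_k / p_{k+1} onto H_k, the ℂ-span in AddMonoidAlgebra ℂ (Fin d → ℕ) of the monomials X^u with u ∈ Λ and ⟨n,u⟩ = k. -/

import Mathlib

noncomputable section

/-- Coefficient of a multivariate power series at an exponent `u : Fin d → ℕ`. -/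
def coeffFun (d : ℕ) (φ : MvPowerSeries (Fin d) ℂ) (u : Fin d → ℕ) : ℂ :=
  MvPowerSeries.coeff (Finsupp.equivFunOnFinite.symm u) φ

/-- Support of a multivariate power series, as a set of exponents `u : Fin d → ℕ`. -/
def suppS (d : ℕ) (φ : MvPowerSeries (Fin d) ℂ) : Set (Fin d → ℕ) :=
  {u | coeffFun d φ u ≠ 0}

/-- The weight `⟨n,u⟩ = ∑ i, n i * u i`. -/
def wt {d : ℕ} (n u : Fin d → ℕ) : ℕ := ∑ i, n i * u i

/-- The `n`-weighted order of a power series: the least weight of an exponent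
in its support (junk value `0` for `φ = 0`, by `Nat.sInf_empty`). -/
def ordn (d : ℕ) (n : Fin d → ℕ) (φ : MvPowerSeries (Fin d) ℂ) : ℕ :=
  sInf (wt n '' suppS d φ)

lemma suppS_add (d : ℕ) (φ ψ : MvPowerSeries (Fin d) ℂ) :
    suppS d (φ + ψ) ⊆ suppS d φ ∪ suppS d ψ := by
  intro u hu
  by_contra h
  simp only [Set.mem_union, suppS, Set.mem_setOf_eq, not_or, not_not] at h hu
  apply hu
  show coeffFun d (φ + ψ) u = 0
  have : coeffFun d (φ + ψ) u = coeffFun d φ u + coeffFun d ψ u := by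
    simp [coeffFun, map_add]
  rw [this, h.1, h.2, add_zero]

/-- `ℂ[[Λ]]`: the subalgebra of `MvPowerSeries (Fin d) ℂ` of series with support
contained in the additive submonoid `Λ`; it is the analytic algebra of the germ
of the affine toric variety `Z^Λ = Spec ℂ[Λ]` at its zero-dimensional orbit. -/
def RL (d : ℕ) (Λ : AddSubmonoid (Fin d → ℕ)) : Subalgebra ℂ (MvPowerSeries (Fin d) ℂ) where
  carrier := {φ | suppS d φ ⊆ (Λ : Set (Fin d → ℕ))}
  zero_mem' := by
    intro u hu
    exact absurd (by simp [coeffFun]) hu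
  one_mem' := by
    intro u hu
    have h : coeffFun d 1 u ≠ 0 := hu
    rw [coeffFun, MvPowerSeries.coeff_one] at h
    have : Finsupp.equivFunOnFinite.symm u = 0 := by
      by_contra hne; exact h (if_neg hne)
    have hu0 : u = 0 := by
      have := congrArg Finsupp.equivFunOnFinite this
      rw [Equiv.apply_symm_apply] at this
      exact this.trans rfl
    rw [hu0]; exact Λ.zero_mem
  add_mem' := by
    intro φ ψ hφ hψ u hu
    rcases suppS_add d φ ψ hu with h | h
    · exact hφ h
    · exact hψ h
  mul_mem' := by
    intro φ ψ hφ hψ u hu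
    have h : coeffFun d (φ * ψ) u ≠ 0 := hu
    rw [coeffFun, MvPowerSeries.coeff_mul] at h
    obtain ⟨p, hp, hne⟩ := Finset.exists_ne_zero_of_sum_ne_zero h
    replace hp := Finset.HasAntidiagonal.mem_antidiagonal.mp hp
    have h1 : Finsupp.equivFunOnFinite p.1 ∈ Λ := by
      apply hφ
      show coeffFun d φ _ ≠ 0
      rw [coeffFun, Equiv.symm_apply_apply]
      exact left_ne_zero_of_mul hne
    have h2 : Finsupp.equivFunOnFinite p.2 ∈ Λ := by
      apply hψ
      show coeffFun d ψ _ ≠ 0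
      rw [coeffFun, Equiv.symm_apply_apply]
      exact right_ne_zero_of_mul hne
    have hsum : Finsupp.equivFunOnFinite p.1 + Finsupp.equivFunOnFinite p.2 = u := by
      have := congrArg Finsupp.equivFunOnFinite hp
      rw [Equiv.apply_symm_apply] at this
      exact this
    rw [← hsum]
    exact Λ.add_mem h1 h2
  algebraMap_mem' := by
    intro c u hu
    have h : coeffFun d (algebraMap ℂ (MvPowerSeries (Fin d) ℂ) c) u ≠ 0 := hu
    rw [coeffFun] at h
    rw [show (algebraMap ℂ (MvPowerSeries (Fin d) ℂ) c) = MvPowerSeries.C (σ := Fin d) (R := ℂ) c from rfl,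
      MvPowerSeries.coeff_C] at h
    have : Finsupp.equivFunOnFinite.symm u = 0 := by
      by_contra hne; exact h (if_neg hne)
    have hu0 : u = 0 := by
      have := congrArg Finsupp.equivFunOnFinite this
      rw [Equiv.apply_symm_apply] at this
      exact this.trans rfl
    rw [hu0]; exact Λ.zero_mem

lemma suppS_nonempty (d : ℕ) (φ : MvPowerSeries (Fin d) ℂ) (hφ : φ ≠ 0) :
    (suppS d φ).Nonempty := by
  have : ∃ v : Fin d →₀ ℕ, MvPowerSeries.coeff v φ ≠ 0 := by
    by_contra h
    push_neg at h
    exact hφ (MvPowerSeries.ext h)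
  obtain ⟨v, hv⟩ := this
  refine ⟨Finsupp.equivFunOnFinite v, ?_⟩
  show coeffFun d φ _ ≠ 0
  rw [coeffFun, Equiv.symm_apply_apply]
  exact hv

lemma ordn_le (d : ℕ) (n : Fin d → ℕ) (φ : MvPowerSeries (Fin d) ℂ) (u : Fin d → ℕ)
    (hu : u ∈ suppS d φ) : ordn d n φ ≤ wt n u :=
  Nat.sInf_le ⟨u, hu, rfl⟩

lemma le_ordn (d : ℕ) (n : Fin d → ℕ) (φ : MvPowerSeries (Fin d) ℂ) (k : ℕ) (hφ : φ ≠ 0)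
    (h : ∀ u ∈ suppS d φ, k ≤ wt n u) : k ≤ ordn d n φ := by
  apply le_csInf
  · exact (suppS_nonempty d φ hφ).image _
  · rintro b ⟨u, hu, rfl⟩
    exact h u hu

lemma suppS_smul (d : ℕ) (c : ℂ) (φ : MvPowerSeries (Fin d) ℂ) :
    suppS d (c • φ) ⊆ suppS d φ := by
  intro u hu
  have h : coeffFun d (c • φ) u ≠ 0 := hu
  have : coeffFun d (c • φ) u = c * coeffFun d φ u := by
    simp [coeffFun]
  rw [this] at h
  exact right_ne_zero_of_mul h

/-- The `k`-th step `p_k = {φ ∈ R | φ = 0 ∨ ord_n φ ≥ k}` of the filtration of a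
subalgebra `R` of the power series ring induced by the `n`-weighted order,
as a `ℂ`-submodule of the power series ring. -/
def pP (d : ℕ) (R : Subalgebra ℂ (MvPowerSeries (Fin d) ℂ)) (n : Fin d → ℕ) (k : ℕ) :
    Submodule ℂ (MvPowerSeries (Fin d) ℂ) where
  carrier := {φ | φ ∈ R ∧ (φ = 0 ∨ k ≤ ordn d n φ)}
  zero_mem' := ⟨R.zero_mem, Or.inl rfl⟩
  add_mem' := by
    rintro φ ψ ⟨hφR, hφ⟩ ⟨hψR, hψ⟩
    refine ⟨R.add_mem hφR hψR, ?_⟩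
    by_cases h0 : φ + ψ = 0
    · exact Or.inl h0
    · refine Or.inr (le_ordn d n _ k h0 ?_)
      intro u hu
      rcases suppS_add d φ ψ hu with h | h
      · rcases hφ with h1 | h1
        · exact absurd h (by simp [h1, suppS, coeffFun])
        · exact le_trans h1 (ordn_le d n φ u h)
      · rcases hψ with h1 | h1
        · exact absurd h (by simp [h1, suppS, coeffFun])
        · exact le_trans h1 (ordn_le d n ψ u h)
  smul_mem' := by
    rintro c φ ⟨hφR, hφ⟩
    refine ⟨R.smul_mem hφR c, ?_⟩
    by_cases h0 : c • φ = 0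
    · exact Or.inl h0
    · refine Or.inr ?_
      rcases hφ with h1 | h1
      · exact absurd (by rw [h1, smul_zero]) h0
      · refine le_ordn d n _ k h0 ?_
        intro u hu
        exact le_trans h1 (ordn_le d n φ u (suppS_smul d c φ hu))

/-- The quotient module `p_k / p_{k+1}`. -/
abbrev grPiece (d : ℕ) (R : Subalgebra ℂ (MvPowerSeries (Fin d) ℂ)) (n : Fin d → ℕ)
    (k : ℕ) :=
  ↥(pP d R n k) ⧸ (pP d R n (k + 1)).comap (pP d R n k).subtype

/-- `H_k`: the `ℂ`-span in `AddMonoidAlgebra ℂ (Fin d → ℕ)` of the monomials `X^u`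
with `u ∈ Λ` and `⟨n,u⟩ = k`. -/
def HkAmb (d : ℕ) (Λ : AddSubmonoid (Fin d → ℕ)) (n : Fin d → ℕ) (k : ℕ) :
    Submodule ℂ (AddMonoidAlgebra ℂ (Fin d → ℕ)) :=
  Submodule.span ℂ {x | ∃ u ∈ Λ, wt n u = k ∧ x = AddMonoidAlgebra.single u 1}

lemma wt_zero' {d : ℕ} (n : Fin d → ℕ) : wt n (0 : Fin d → ℕ) = 0 := by simp [wt]

lemma wt_add' {d : ℕ} (n u v : Fin d → ℕ) : wt n (u + v) = wt n u + wt n v := by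
  simp [wt, mul_add, Finset.sum_add_distrib]

lemma msum_le {s t : Multiset ℕ} (h : s ≤ t) : s.sum ≤ t.sum := by
  obtain ⟨u, rfl⟩ := Multiset.le_iff_exists_add.1 h
  simp

/-- The weight as an additive monoid hom. -/
def wtHom {d : ℕ} (n : Fin d → ℕ) : (Fin d → ℕ) →+ ℕ where
  toFun := wt n
  map_zero' := wt_zero' n
  map_add' := wt_add' n

lemma fiber_finite (d : ℕ) (Λ : AddSubmonoid (Fin d → ℕ)) (hΛ : Λ.FG) (n : Fin d → ℕ)
    (hn : ∀ u ∈ Λ, u ≠ (0 : Fin d → ℕ) → 0 < wt n u) (k : ℕ) :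
    {u : Fin d → ℕ | u ∈ Λ ∧ wt n u = k}.Finite := by
  classical
  obtain ⟨S, hS⟩ := hΛ
  have key : {u : Fin d → ℕ | u ∈ Λ ∧ wt n u = k} ⊆
      (fun c : ↥S → Fin (k + 1) => ∑ s : ↥S, (c s : ℕ) • (s : Fin d → ℕ)) '' Set.univ := by
    rintro u ⟨huΛ, hwt⟩
    rw [← hS] at huΛ
    obtain ⟨l, hl, hsum⟩ := AddSubmonoid.exists_multiset_of_mem_closure huΛ
    have hwsum : (l.map (wt n)).sum = k := by
      have h := map_multiset_sum (wtHom n) l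
      simp only [wtHom, AddMonoidHom.coe_mk, ZeroHom.coe_mk] at h
      rw [← h, hsum, hwt]
    have hbound : ∀ s : Fin d → ℕ, s ∈ S → s ≠ 0 → l.count s ≤ k := by
      intro s hsS hs0
      have hsΛ : s ∈ Λ := hS ▸ AddSubmonoid.subset_closure hsS
      have hws : 1 ≤ wt n s := hn s hsΛ hs0
      have hfil : (l.filter (· = s)).map (wt n) = Multiset.replicate (l.count s) (wt n s) := by
        rw [Multiset.filter_eq', Multiset.map_replicate]
      have hle : (l.filter (· = s)).map (wt n) ≤ l.map (wt n) :=
        Multiset.map_le_map (Multiset.filter_le _ _)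
      have := msum_le hle
      rw [hfil, Multiset.sum_replicate, smul_eq_mul, hwsum] at this
      calc l.count s ≤ l.count s * wt n s := Nat.le_mul_of_pos_right _ hws
        _ ≤ k := this
    refine ⟨fun s => if h : (s : Fin d → ℕ) = 0 then 0 else
      ⟨l.count (s : Fin d → ℕ), Nat.lt_succ_of_le (hbound _ s.2 h)⟩, Set.mem_univ _, ?_⟩
    have hfun : (fun s : ↥S => ((if h : (s : Fin d → ℕ) = 0 then (0 : Fin (k + 1)) else
        ⟨l.count (s : Fin d → ℕ), Nat.lt_succ_of_le (hbound _ s.2 h)⟩ : Fin (k + 1)) : ℕ) •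
          (s : Fin d → ℕ)) =
        fun s : ↥S => (if (s : Fin d → ℕ) = 0 then 0 else l.count (s : Fin d → ℕ)) •
          (s : Fin d → ℕ) := by
      funext s
      by_cases h : (s : Fin d → ℕ) = 0 <;> simp [h]
    show (∑ s : ↥S, _) = u
    rw [hfun]
    rw [show (∑ s : ↥S, (if (s : Fin d → ℕ) = 0 then 0 else l.count (s : Fin d → ℕ)) •
        (s : Fin d → ℕ)) = ∑ a ∈ S, (if a = 0 then 0 else l.count a) • a from
      Finset.sum_attach S (fun a => (if a = 0 then 0 else l.count a) • a)]
    have h1 : ∑ a ∈ S, (if a = 0 then 0 else l.count a) • a = ∑ a ∈ S, l.count a • a := by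
      refine Finset.sum_congr rfl fun a _ => ?_
      by_cases h : a = 0
      · subst h; simp
      · rw [if_neg h]
    rw [h1]
    rw [← Finset.sum_multiset_count_of_subset l S
      (fun a ha => hl a (Multiset.mem_toFinset.1 ha)), hsum]
  exact Set.Finite.subset (Set.toFinite _) key

/-- The "initial form at level `k`" linear map, truncated to a finite set `T` of exponents. -/
def Fmap (d : ℕ) (T : Finset (Fin d → ℕ)) :
    MvPowerSeries (Fin d) ℂ →ₗ[ℂ] AddMonoidAlgebra ℂ (Fin d → ℕ) where
  toFun φ := ∑ u ∈ T, coeffFun d φ u • AddMonoidAlgebra.single u 1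
  map_add' φ ψ := by
    simp only [coeffFun, map_add, add_smul, Finset.sum_add_distrib]
  map_smul' c φ := by
    simp only [RingHom.id_apply, Finset.smul_sum]
    refine Finset.sum_congr rfl fun u _ => ?_
    have h : coeffFun d (c • φ) u = c * coeffFun d φ u := by simp [coeffFun]
    rw [h, mul_smul]

lemma Fmap_apply (d : ℕ) (T : Finset (Fin d → ℕ)) (φ : MvPowerSeries (Fin d) ℂ)
    (v : Fin d → ℕ) :
    (Fmap d T φ).coeff v = if v ∈ T then coeffFun d φ v else 0 := by
  classical
  show (∑ u ∈ T, coeffFun d φ u • AddMonoidAlgebra.single u (1 : ℂ)).coeff v = _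
  rw [AddMonoidAlgebra.coeff_sum, Finset.sum_apply']
  have h : ∀ u : Fin d → ℕ, (coeffFun d φ u • AddMonoidAlgebra.single u (1 : ℂ)).coeff v
      = if u = v then coeffFun d φ u else 0 := by
    intro u
    show (coeffFun d φ u • Finsupp.single u (1 : ℂ)) v = _
    rw [Finsupp.smul_apply, Finsupp.single_apply]
    split <;> simp
  rw [Finset.sum_congr rfl fun u _ => h u, Finset.sum_ite_eq']

/-- for `Λ` finitely generated and `n` of positive weight on `Λ \ {0}`,
the map sending a nonzero class `φ mod p_{k+1}` (for `φ ∈ p_k`) to the `n`-initial form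
`in_n φ`, and the zero class to `0`, is a well-defined `ℂ`-linear isomorphism from
`p_k / p_{k+1}` onto `H_k` (the span of the monomials `X^u`, `u ∈ Λ`, `⟨n,u⟩ = k`). -/
theorem grPiece_equiv_Hk (d : ℕ) (hd : 1 ≤ d) (Λ : AddSubmonoid (Fin d → ℕ))
    (hΛ : Λ.FG) (n : Fin d → ℕ)
    (hn : ∀ u ∈ Λ, u ≠ (0 : Fin d → ℕ) → 0 < wt n u) (k : ℕ) :
    ∃ e : grPiece d (RL d Λ) n k ≃ₗ[ℂ] ↥(HkAmb d Λ n k),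
      ∀ (φ : MvPowerSeries (Fin d) ℂ) (hφ : φ ∈ pP d (RL d Λ) n k),
        (fun u : Fin d → ℕ =>
          ((e (Submodule.Quotient.mk ⟨φ, hφ⟩) : ↥(HkAmb d Λ n k)) :
            AddMonoidAlgebra ℂ (Fin d → ℕ)).coeff u) =
          fun u : Fin d → ℕ => if wt n u = k then coeffFun d φ u else 0 := by
  classical
  have hfin := fiber_finite d Λ hΛ n hn k
  set T : Finset (Fin d → ℕ) := hfin.toFinset with hT
  have hmemT : ∀ v : Fin d → ℕ, v ∈ T ↔ v ∈ Λ ∧ wt n v = k := fun v => hfin.mem_toFinset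
  -- the key coefficient formula
  have hFcoeff : ∀ φ : MvPowerSeries (Fin d) ℂ, φ ∈ RL d Λ → ∀ v : Fin d → ℕ,
      (Fmap d T φ).coeff v = if wt n v = k then coeffFun d φ v else 0 := by
    intro φ hφ v
    rw [Fmap_apply]
    by_cases hw : wt n v = k
    · rw [if_pos hw]
      by_cases hΛv : v ∈ Λ
      · rw [if_pos ((hmemT v).2 ⟨hΛv, hw⟩)]
      · have hc : coeffFun d φ v = 0 := by
          by_contra h
          exact hΛv (hφ h)
        rw [hc]
        split <;> rfl
    · have hvT : v ∉ T := fun h => hw ((hmemT v).1 h).2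
      rw [if_neg hvT, if_neg hw]
  -- the restricted map into H_k
  have hmem : ∀ x : ↥(pP d (RL d Λ) n k),
      ((Fmap d T).comp (pP d (RL d Λ) n k).subtype) x ∈ HkAmb d Λ n k := by
    intro x
    refine Submodule.sum_mem _ fun u hu => Submodule.smul_mem _ _ ?_
    exact Submodule.subset_span ⟨u, ((hmemT u).1 hu).1, ((hmemT u).1 hu).2, rfl⟩
  set F' : ↥(pP d (RL d Λ) n k) →ₗ[ℂ] ↥(HkAmb d Λ n k) :=
    LinearMap.codRestrict (HkAmb d Λ n k) ((Fmap d T).comp (pP d (RL d Λ) n k).subtype) hmem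
    with hF'
  -- kernel computation
  have hker : LinearMap.ker F' = (pP d (RL d Λ) n (k + 1)).comap (pP d (RL d Λ) n k).subtype := by
    ext x
    obtain ⟨φ, hφ⟩ := x
    simp only [LinearMap.mem_ker, Submodule.mem_comap, Submodule.coe_subtype]
    constructor
    · intro h
      have hzero : ∀ v : Fin d → ℕ, wt n v = k → coeffFun d φ v = 0 := by
        intro v hv
        have := congrArg (fun y : ↥(HkAmb d Λ n k) => (y : AddMonoidAlgebra ℂ (Fin d → ℕ)).coeff v) h
        simp only [ZeroMemClass.coe_zero, AddMonoidAlgebra.coeff_zero, Finsupp.coe_zero, Pi.zero_apply] at this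
        rw [hF'] at this
        rw [LinearMap.codRestrict_apply, LinearMap.comp_apply, Submodule.coe_subtype,
          hFcoeff φ hφ.1 v, if_pos hv] at this
        exact this
      refine ⟨hφ.1, ?_⟩
      rcases hφ.2 with h0 | hord
      · exact Or.inl h0
      · by_cases h0 : φ = 0
        · exact Or.inl h0
        · refine Or.inr (le_ordn d n φ (k + 1) h0 ?_)
          intro u hu
          have h1 : k ≤ wt n u := le_trans hord (ordn_le d n φ u hu)
          have h2 : wt n u ≠ k := by
            intro he
            exact hu (hzero u he)
          omega
    · intro h
      apply Subtype.ext
      show ((Fmap d T).comp (pP d (RL d Λ) n k).subtype) ⟨φ, hφ⟩ = 0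
      refine AddMonoidAlgebra.coeff_inj.1 (Finsupp.ext fun v => ?_)
      show (Fmap d T φ).coeff v = 0
      rw [hFcoeff φ hφ.1 v]
      by_cases hw : wt n v = k
      · rw [if_pos hw]
        rcases h.2 with h0 | hord
        · simp [h0, coeffFun]
        · by_contra hc
          have : k + 1 ≤ wt n v := le_trans hord (ordn_le d n φ v hc)
          omega
      · rw [if_neg hw]
  -- surjectivity
  have claim : ∀ y ∈ HkAmb d Λ n k, ∃ x : ↥(pP d (RL d Λ) n k),
      ((Fmap d T).comp (pP d (RL d Λ) n k).subtype) x = y := by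
    intro y hy
    refine Submodule.span_induction ?_ ?_ ?_ ?_ hy
    · rintro x ⟨u, huΛ, hwu, rfl⟩
      set φ : MvPowerSeries (Fin d) ℂ :=
        MvPowerSeries.monomial (Finsupp.equivFunOnFinite.symm u) 1 with hφdef
      have hcoeff : ∀ v : Fin d → ℕ, coeffFun d φ v = if v = u then 1 else 0 := by
        intro v
        rw [hφdef, coeffFun, MvPowerSeries.coeff_monomial]
        by_cases h : v = u
        · rw [if_pos h, if_pos (by rw [h])]
        · rw [if_neg h, if_neg fun he => h (Equiv.injective _ he)]
      have hsupp : suppS d φ = {u} := by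
        ext v
        simp only [suppS, Set.mem_setOf_eq, Set.mem_singleton_iff, hcoeff v]
        by_cases h : v = u <;> simp [h]
      have hφR : φ ∈ RL d Λ := by
        intro v hv
        rw [hsupp] at hv
        rw [hv]
        exact huΛ
      have hφ0 : φ ≠ 0 := by
        intro h
        have := hcoeff u
        rw [h, if_pos rfl] at this
        simp [coeffFun] at this
      have hφp : φ ∈ pP d (RL d Λ) n k := by
        refine ⟨hφR, Or.inr (le_ordn d n φ k hφ0 fun v hv => ?_)⟩
        rw [hsupp] at hv
        rw [hv, hwu]
      refine ⟨⟨φ, hφp⟩, ?_⟩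
      show Fmap d T φ = AddMonoidAlgebra.single u 1
      refine AddMonoidAlgebra.coeff_inj.1 (Finsupp.ext fun v => ?_)
      rw [hFcoeff φ hφR v, hcoeff v]
      by_cases h : v = u
      · subst h
        rw [if_pos hwu, if_pos rfl, AddMonoidAlgebra.coeff_single_apply, if_pos rfl]
      · rw [if_neg h, ite_self, AddMonoidAlgebra.coeff_single_apply,
          if_neg (fun he : u = v => h he.symm)]
    · exact ⟨0, by simp⟩
    · rintro x y _ _ ⟨a, ha⟩ ⟨b, hb⟩
      exact ⟨a + b, by rw [map_add, ha, hb]⟩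
    · rintro c x _ ⟨a, ha⟩
      exact ⟨c • a, by rw [map_smul, ha]⟩
  have hsurj : Function.Surjective F' := by
    rintro ⟨y, hy⟩
    obtain ⟨x, hx⟩ := claim y hy
    exact ⟨x, Subtype.ext (by rw [hF', LinearMap.codRestrict_apply]; exact hx)⟩
  refine ⟨(Submodule.quotEquivOfEq _ _ hker.symm).trans (F'.quotKerEquivOfSurjective hsurj),
    ?_⟩
  intro φ hφ
  funext u
  have hval : (((Submodule.quotEquivOfEq _ _ hker.symm).trans
      (F'.quotKerEquivOfSurjective hsurj)) (Submodule.Quotient.mk ⟨φ, hφ⟩) :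
        AddMonoidAlgebra ℂ (Fin d → ℕ)) = Fmap d T φ := by
    rfl
  show (((Submodule.quotEquivOfEq _ _ hker.symm).trans
      (F'.quotKerEquivOfSurjective hsurj)) (Submodule.Quotient.mk ⟨φ, hφ⟩) :
        AddMonoidAlgebra ℂ (Fin d → ℕ)).coeff u = _
  rw [hval]
  exact hFcoeff φ hφ.1 u
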